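/- Let P ⊂ ℝ^4 be the convex hull of the ten points (0,0,0,0), (1,0,0,0), (0,1,0,0), (0,0,1,0), (1,1,1,2), (0,0,0,1), (1,0,0,1), (0,1,0,1), (0,0,1,1), (1,1,1,3), let A = {(α,1) : α ∈ P ∩ ℤ^4} ⊂ ℤ^5, and for each positive integer m let x_m = (m,1,1,1,m+1). Then each x_m lies in the cone ℝ_{≥0}A intersected with ℤ^5, but no x_m lies in the additive monoid ℤ_{≥0}A generated by A. In particular, the set (ℝ_{≥0}A ∩ ℤA) \ ℤ_{≥0}A is infinite, so P is not very ample. -/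

import Mathlib

open Finset

noncomputable section

/-- Cast an integer lattice point to a real point. -/
def castPt {d : ℕ} (a : Fin d → ℤ) : Fin d → ℝ := fun i => (a i : ℝ)

/-- The cone of nonnegative real combinations of a set of vectors. -/
def coneOf {d : ℕ} (A : Set (Fin d → ℝ)) : Set (Fin d → ℝ) :=
  {x | ∃ (n : ℕ) (c : Fin n → ℝ) (v : Fin n → (Fin d → ℝ)),
    (∀ i, 0 ≤ c i) ∧ (∀ i, v i ∈ A) ∧ x = ∑ i, c i • v i}

/-- `A_P = {(α,1) : α ∈ P ∩ ℤ^d} ⊂ ℤ^(d+1)`. -/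
def APts {d : ℕ} (P : Set (Fin d → ℝ)) : Set (Fin (d+1) → ℤ) :=
  {b | b (Fin.last d) = 1 ∧ castPt (fun i : Fin d => b i.castSucc) ∈ P}

/-- The polytope `P_2 ⊂ ℝ^4` from Ogata's proposed example. -/
def Pogata : Set (Fin 4 → ℝ) := convexHull ℝ
  ({![0,0,0,0], ![1,0,0,0], ![0,1,0,0], ![0,0,1,0], ![1,1,1,2],
    ![0,0,0,1], ![1,0,0,1], ![0,1,0,1], ![0,0,1,1], ![1,1,1,3]} : Set (Fin 4 → ℝ))

def Sgen : Set (Fin 4 → ℝ) :=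
  {![0,0,0,0], ![1,0,0,0], ![0,1,0,0], ![0,0,1,0], ![1,1,1,2],
    ![0,0,0,1], ![1,0,0,1], ![0,1,0,1], ![0,0,1,1], ![1,1,1,3]}

lemma pogata_le (a : Fin 4 → ℝ) (c : ℝ)
    (h : ∀ p ∈ Sgen, a 0 * p 0 + a 1 * p 1 + a 2 * p 2 + a 3 * p 3 ≤ c) :
    ∀ x ∈ Pogata, a 0 * x 0 + a 1 * x 1 + a 2 * x 2 + a 3 * x 3 ≤ c := by
  intro x hx
  have hlin : IsLinearMap ℝ (fun x : Fin 4 → ℝ => a 0 * x 0 + a 1 * x 1 + a 2 * x 2 + a 3 * x 3) := by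
    constructor
    · intro p q; simp only [Pi.add_apply]; ring
    · intro t p; simp only [Pi.smul_apply, smul_eq_mul]; ring
  exact convexHull_min h (convex_halfSpace_le hlin c) hx

lemma gen_check : ∀ p ∈ Sgen, (1:ℝ) * p 0 + 1 * p 1 + 1 * p 2 + (-1) * p 3 ≤ 1 := by
  rintro p hp
  simp only [Sgen, Set.mem_insert_iff, Set.mem_singleton_iff] at hp
  rcases hp with rfl|rfl|rfl|rfl|rfl|rfl|rfl|rfl|rfl|rfl <;> norm_num [Matrix.cons_val_two, Matrix.cons_val_three]

lemma lattice_ineqs (y : Fin 5 → ℤ) (hy : y ∈ APts Pogata) :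
    0 ≤ y 0 ∧ y 0 ≤ 1 ∧ 0 ≤ y 1 ∧ y 1 ≤ 1 ∧ 0 ≤ y 2 ∧ y 2 ≤ 1 ∧ 0 ≤ y 3 ∧
    y 0 + y 1 + y 2 ≤ y 3 + 1 ∧ y 0 + y 1 - y 2 ≤ 1 ∧ y 0 - y 1 + y 2 ≤ 1 ∧
    (- y 0) + y 1 + y 2 ≤ 1 ∧ y 4 = 1 := by
  obtain ⟨h4, hP⟩ := hy
  have key : ∀ (a : Fin 4 → ℝ) (c : ℝ),
      (∀ p ∈ Sgen, a 0 * p 0 + a 1 * p 1 + a 2 * p 2 + a 3 * p 3 ≤ c) →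
      a 0 * (y 0:ℝ) + a 1 * (y 1:ℝ) + a 2 * (y 2:ℝ) + a 3 * (y 3:ℝ) ≤ c :=
    fun a c h => pogata_le a c h _ hP
  have tac : ∀ p ∈ Sgen, p = ![0,0,0,0] ∨ p = ![1,0,0,0] ∨ p = ![0,1,0,0] ∨ p = ![0,0,1,0] ∨
      p = ![1,1,1,2] ∨ p = ![0,0,0,1] ∨ p = ![1,0,0,1] ∨ p = ![0,1,0,1] ∨ p = ![0,0,1,1] ∨
      p = ![1,1,1,3] := fun p hp => hp
  have k1 := key ![-1,0,0,0] 0 (by rintro p hp; rcases tac p hp with rfl|rfl|rfl|rfl|rfl|rfl|rfl|rfl|rfl|rfl <;> norm_num [Matrix.cons_val_two, Matrix.cons_val_three])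
  have k2 := key ![1,0,0,0] 1 (by rintro p hp; rcases tac p hp with rfl|rfl|rfl|rfl|rfl|rfl|rfl|rfl|rfl|rfl <;> norm_num [Matrix.cons_val_two, Matrix.cons_val_three])
  have k3 := key ![0,-1,0,0] 0 (by rintro p hp; rcases tac p hp with rfl|rfl|rfl|rfl|rfl|rfl|rfl|rfl|rfl|rfl <;> norm_num [Matrix.cons_val_two, Matrix.cons_val_three])
  have k4 := key ![0,1,0,0] 1 (by rintro p hp; rcases tac p hp with rfl|rfl|rfl|rfl|rfl|rfl|rfl|rfl|rfl|rfl <;> norm_num [Matrix.cons_val_two, Matrix.cons_val_three])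
  have k5 := key ![0,0,-1,0] 0 (by rintro p hp; rcases tac p hp with rfl|rfl|rfl|rfl|rfl|rfl|rfl|rfl|rfl|rfl <;> norm_num [Matrix.cons_val_two, Matrix.cons_val_three])
  have k6 := key ![0,0,1,0] 1 (by rintro p hp; rcases tac p hp with rfl|rfl|rfl|rfl|rfl|rfl|rfl|rfl|rfl|rfl <;> norm_num [Matrix.cons_val_two, Matrix.cons_val_three])
  have k7 := key ![0,0,0,-1] 0 (by rintro p hp; rcases tac p hp with rfl|rfl|rfl|rfl|rfl|rfl|rfl|rfl|rfl|rfl <;> norm_num [Matrix.cons_val_two, Matrix.cons_val_three])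
  have k8 := key ![1,1,1,-1] 1 (by rintro p hp; rcases tac p hp with rfl|rfl|rfl|rfl|rfl|rfl|rfl|rfl|rfl|rfl <;> norm_num [Matrix.cons_val_two, Matrix.cons_val_three])
  have k9 := key ![1,1,-1,0] 1 (by rintro p hp; rcases tac p hp with rfl|rfl|rfl|rfl|rfl|rfl|rfl|rfl|rfl|rfl <;> norm_num [Matrix.cons_val_two, Matrix.cons_val_three])
  have k10 := key ![1,-1,1,0] 1 (by rintro p hp; rcases tac p hp with rfl|rfl|rfl|rfl|rfl|rfl|rfl|rfl|rfl|rfl <;> norm_num [Matrix.cons_val_two, Matrix.cons_val_three])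
  have k11 := key ![-1,1,1,0] 1 (by rintro p hp; rcases tac p hp with rfl|rfl|rfl|rfl|rfl|rfl|rfl|rfl|rfl|rfl <;> norm_num [Matrix.cons_val_two, Matrix.cons_val_three])
  norm_num [Matrix.cons_val_two, Matrix.cons_val_three] at k1 k2 k3 k4 k5 k6 k7 k8 k9 k10 k11
  have K2 : y 0 ≤ 1 := by exact_mod_cast k2
  have K4 : y 1 ≤ 1 := by exact_mod_cast k4
  have K6 : y 2 ≤ 1 := by exact_mod_cast k6
  have K8 : y 0 + y 1 + y 2 ≤ 1 + y 3 := by exact_mod_cast k8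
  have K9 : y 0 + y 1 ≤ 1 + y 2 := by exact_mod_cast k9
  have K10 : y 0 + -(y 1) + y 2 ≤ 1 := by exact_mod_cast k10
  have K11 : -(y 0) + y 1 + y 2 ≤ 1 := by exact_mod_cast k11
  exact ⟨k1, K2, k3, K4, k5, K6, k7, by omega, by omega, by omega, by omega, h4⟩

lemma mem_APts (b : Fin 5 → ℤ) (hb4 : b (Fin.last 4) = 1)
    (h : castPt (fun i : Fin 4 => b i.castSucc) ∈ Sgen) : b ∈ APts Pogata :=
  ⟨hb4, subset_convexHull ℝ Sgen h⟩

lemma hA0 : (![0,0,0,0,1] : Fin 5 → ℤ) ∈ APts Pogata := by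
  refine mem_APts _ rfl ?_
  have e : castPt (fun i : Fin 4 => (![0,0,0,0,1] : Fin 5 → ℤ) i.castSucc) = ![0,0,0,0] := by
    funext i; fin_cases i <;> norm_num [castPt]
  rw [e]; exact Set.mem_insert _ _

lemma hA1 : (![1,0,0,0,1] : Fin 5 → ℤ) ∈ APts Pogata := by
  refine mem_APts _ rfl ?_
  have e : castPt (fun i : Fin 4 => (![1,0,0,0,1] : Fin 5 → ℤ) i.castSucc) = ![1,0,0,0] := by
    funext i; fin_cases i <;> norm_num [castPt]
  rw [e]; exact Set.mem_insert_of_mem _ (Set.mem_insert _ _)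

lemma hA2 : (![0,1,0,0,1] : Fin 5 → ℤ) ∈ APts Pogata := by
  refine mem_APts _ rfl ?_
  have e : castPt (fun i : Fin 4 => (![0,1,0,0,1] : Fin 5 → ℤ) i.castSucc) = ![0,1,0,0] := by
    funext i; fin_cases i <;> norm_num [castPt]
  rw [e]; exact Set.mem_insert_of_mem _ (Set.mem_insert_of_mem _ (Set.mem_insert _ _))

lemma hA3 : (![0,0,1,0,1] : Fin 5 → ℤ) ∈ APts Pogata := by
  refine mem_APts _ rfl ?_
  have e : castPt (fun i : Fin 4 => (![0,0,1,0,1] : Fin 5 → ℤ) i.castSucc) = ![0,0,1,0] := by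
    funext i; fin_cases i <;> norm_num [castPt]
  rw [e]
  exact Set.mem_insert_of_mem _ (Set.mem_insert_of_mem _ (Set.mem_insert_of_mem _ (Set.mem_insert _ _)))

lemma hA4 : (![1,1,1,2,1] : Fin 5 → ℤ) ∈ APts Pogata := by
  refine mem_APts _ rfl ?_
  have e : castPt (fun i : Fin 4 => (![1,1,1,2,1] : Fin 5 → ℤ) i.castSucc) = ![1,1,1,2] := by
    funext i; fin_cases i <;> norm_num [castPt]
  rw [e]
  exact Set.mem_insert_of_mem _ (Set.mem_insert_of_mem _ (Set.mem_insert_of_mem _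
    (Set.mem_insert_of_mem _ (Set.mem_insert _ _))))

lemma hA5 : (![0,0,0,1,1] : Fin 5 → ℤ) ∈ APts Pogata := by
  refine mem_APts _ rfl ?_
  have e : castPt (fun i : Fin 4 => (![0,0,0,1,1] : Fin 5 → ℤ) i.castSucc) = ![0,0,0,1] := by
    funext i; fin_cases i <;> norm_num [castPt]
  rw [e]
  exact Set.mem_insert_of_mem _ (Set.mem_insert_of_mem _ (Set.mem_insert_of_mem _
    (Set.mem_insert_of_mem _ (Set.mem_insert_of_mem _ (Set.mem_insert _ _)))))

lemma cone_mem (m : ℤ) (hm : 1 ≤ m) :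
    castPt ![m, 1, 1, 1, m + 1] ∈ coneOf (castPt '' APts Pogata) := by
  have hm' : (1:ℝ) ≤ (m:ℝ) := by exact_mod_cast hm
  refine ⟨4, ![(m:ℝ) - 1/2, 1/2, 1/2, 1/2],
    ![castPt ![1,0,0,0,1], castPt ![0,1,0,0,1], castPt ![0,0,1,0,1], castPt ![1,1,1,2,1]],
    ?_, ?_, ?_⟩
  · intro i; fin_cases i <;> norm_num <;> linarith
  · intro i; fin_cases i
    exacts [⟨_, hA1, rfl⟩, ⟨_, hA2, rfl⟩, ⟨_, hA3, rfl⟩, ⟨_, hA4, rfl⟩]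
  · funext j
    rw [Fin.sum_univ_four]
    fin_cases j <;>
      simp [castPt, Pi.add_apply, Pi.smul_apply] <;> push_cast <;> ring

lemma not_monoid (m : ℤ) (hm : 1 ≤ m) :
    (![m, 1, 1, 1, m + 1] : Fin 5 → ℤ) ∉ AddSubmonoid.closure (APts Pogata) := by
  intro h
  have Q : ∀ y ∈ AddSubmonoid.closure (APts Pogata),
      0 ≤ y 3 ∧ (y 3 ≤ 1 → y 0 + y 1 + y 2 ≤ y 4) := by
    intro y hy
    refine AddSubmonoid.closure_induction
      (motive := fun y _ => 0 ≤ y 3 ∧ (y 3 ≤ 1 → y 0 + y 1 + y 2 ≤ y 4)) ?_ ?_ ?_ hy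
    · intro x hx
      obtain ⟨a1, a2, a3, a4, a5, a6, a7, a8, a9, a10, a11, a12⟩ := lattice_ineqs x hx
      have hx4 : x 4 = 1 := a12
      exact ⟨a7, fun _ => by omega⟩
    · simp
    · intro a b _ _ ha hb
      refine ⟨?_, ?_⟩ <;> simp only [Pi.add_apply] <;> omega
  obtain ⟨hq1, hq2⟩ := Q _ h
  have e0 : (![m,1,1,1,m+1] : Fin 5 → ℤ) 0 = m := rfl
  have e1 : (![m,1,1,1,m+1] : Fin 5 → ℤ) 1 = 1 := rfl
  have e2 : (![m,1,1,1,m+1] : Fin 5 → ℤ) 2 = 1 := rfl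
  have e3 : (![m,1,1,1,m+1] : Fin 5 → ℤ) 3 = 1 := rfl
  have e4 : (![m,1,1,1,m+1] : Fin 5 → ℤ) 4 = m + 1 := rfl
  rw [e3] at hq2
  rw [e0, e1, e2, e4] at hq2
  omega

lemma grp_mem (m : ℤ) :
    (![m, 1, 1, 1, m + 1] : Fin 5 → ℤ) ∈ AddSubgroup.closure (APts Pogata) := by
  have key : (![m,1,1,1,m+1] : Fin 5 → ℤ) =
      (m-1) • (![1,0,0,0,1] : Fin 5 → ℤ) + ![1,1,1,2,1] + (-![0,0,0,1,1]) +
        (2:ℤ) • (![0,0,0,0,1] : Fin 5 → ℤ) := by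
    funext i
    fin_cases i <;>
      simp [Pi.add_apply, Pi.smul_apply, Pi.neg_apply, smul_eq_mul] <;> ring
  rw [key]
  exact AddSubgroup.add_mem _
    (AddSubgroup.add_mem _
      (AddSubgroup.add_mem _
        (AddSubgroup.zsmul_mem _ (AddSubgroup.subset_closure hA1) _)
        (AddSubgroup.subset_closure hA4))
      (AddSubgroup.neg_mem _ (AddSubgroup.subset_closure hA5)))
    (AddSubgroup.zsmul_mem _ (AddSubgroup.subset_closure hA0) _)


theorem stmt_1 :
    (∀ m : ℤ, 1 ≤ m →
      castPt (![m, 1, 1, 1, m + 1]) ∈ coneOf (castPt '' APts Pogata) ∧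
      (![m, 1, 1, 1, m + 1] : Fin 5 → ℤ) ∉ AddSubmonoid.closure (APts Pogata)) ∧
    {b : Fin 5 → ℤ | castPt b ∈ coneOf (castPt '' APts Pogata) ∧
      b ∈ AddSubgroup.closure (APts Pogata) ∧
      b ∉ AddSubmonoid.closure (APts Pogata)}.Infinite := by
  refine ⟨fun m hm => ⟨cone_mem m hm, not_monoid m hm⟩, ?_⟩
  have inj : Function.Injective
      (fun n : ℕ => (![(n:ℤ)+1, 1, 1, 1, (n:ℤ)+1+1] : Fin 5 → ℤ)) := by
    intro a b hab
    have h0 := congrFun hab 0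
    have : (a:ℤ) + 1 = (b:ℤ) + 1 := h0
    omega
  apply Set.infinite_of_injective_forall_mem inj
  intro n
  have hn : (1:ℤ) ≤ (n:ℤ) + 1 := by omega
  exact ⟨cone_mem ((n:ℤ)+1) hn, grp_mem ((n:ℤ)+1), not_monoid ((n:ℤ)+1) hn⟩
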